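/- Under Assumption (A), for each coordinate i and each T > 0, sup_{t∈[0,T]} | X^{(n),i}_t − n^{−1/2} X^i_{τ_{κ(nt)}} | → 0 in probability as n → ∞. -/

import Mathlib

open MeasureTheory ProbabilityTheory Filter Finset
open scoped ENNReal Topology

noncomputable section

/-- Tensor product of two vectors in `ℝ^d`, viewed as a `d × d` matrix. -/
def tens {d : ℕ} (x y : Fin d → ℝ) : Fin d × Fin d → ℝ := fun ij => x ij.1 * y ij.2

/-- Transpose of a matrix indexed by `Fin d × Fin d`. -/
def transp {d : ℕ} (A : Fin d × Fin d → ℝ) : Fin d × Fin d → ℝ := fun ij => A (ij.2, ij.1)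

/-- Antisymmetric part of a matrix: `Antisym(A) = ½ (A − Aᵀ)`. -/
def antisym {d : ℕ} (A : Fin d × Fin d → ℝ) : Fin d × Fin d → ℝ :=
  (2⁻¹ : ℝ) • (A - transp A)

/-- Discrete Stratonovich iterated sum
`I^Str_{M,N}(X) = Σ_{k=M+1}^N (X_{M,k-1} ⊗ X_{k-1,k} − ½ X_{k-1,k} ⊗ X_{k-1,k})`. -/
def IStr {d : ℕ} (X : ℕ → Fin d → ℝ) (M N : ℕ) : Fin d × Fin d → ℝ :=
  ∑ k ∈ Finset.Icc (M + 1) N,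
    (tens (X (k - 1) - X M) (X k - X (k - 1))
      - (2⁻¹ : ℝ) • tens (X k - X (k - 1)) (X k - X (k - 1)))

/-- Diffusively rescaled linear interpolation
`X^{(n)}_t = n^{-1/2} X_{⌊nt⌋} + n^{-1/2}(nt − ⌊nt⌋)(X_{⌊nt⌋+1} − X_{⌊nt⌋})`. -/
def interp {E : Type*} [AddCommGroup E] [Module ℝ E] (X : ℕ → E) (n : ℕ) (t : ℝ) : E :=
  (Real.sqrt n)⁻¹ • X ⌊(n : ℝ) * t⌋₊ +
    (((n : ℝ) * t - ⌊(n : ℝ) * t⌋₊) / Real.sqrt n) • (X (⌊(n : ℝ) * t⌋₊ + 1) - X ⌊(n : ℝ) * t⌋₊)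

/-- Rescaled interpolated second-level (iterated-sum) process `𝕏^{(n)}_{s,t}`. -/
def interp2 {d : ℕ} (X : ℕ → Fin d → ℝ) (n : ℕ) (s t : ℝ) : Fin d × Fin d → ℝ :=
  ((n : ℝ))⁻¹ • IStr X ⌊(n : ℝ) * s⌋₊ ⌊(n : ℝ) * t⌋₊ +
    (((n : ℝ) * (t - s) - ⌊(n : ℝ) * t⌋₊ + ⌊(n : ℝ) * s⌋₊) / n) •
      (IStr X ⌊(n : ℝ) * s⌋₊ (⌊(n : ℝ) * t⌋₊ + 1) - IStr X ⌊(n : ℝ) * s⌋₊ ⌊(n : ℝ) * t⌋₊)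

/-- `p`-variation norm on `[0,T]` of a one-parameter path, with values in `ℝ≥0∞`. -/
def pVar {E : Type*} [SeminormedAddGroup E] (p T : ℝ) (f : ℝ → E) : ℝ≥0∞ :=
  (⨆ (m : ℕ) (t : ℕ → ℝ) (_ : Monotone t) (_ : t 0 = 0) (_ : t m = T),
    ∑ i ∈ Finset.range m, (‖f (t (i + 1)) - f (t i)‖₊ : ℝ≥0∞) ^ p) ^ p⁻¹

/-- `q`-variation norm on `[0,T]` of a two-parameter increment process `F = (F_{s,t})`. -/
def pVar2 {E : Type*} [SeminormedAddGroup E] (q T : ℝ) (F : ℝ → ℝ → E) : ℝ≥0∞ :=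
  (⨆ (m : ℕ) (t : ℕ → ℝ) (_ : Monotone t) (_ : t 0 = 0) (_ : t m = T),
    ∑ i ∈ Finset.range m, (‖F (t i) (t (i + 1))‖₊ : ℝ≥0∞) ^ q) ^ q⁻¹

/-- Regeneration interval `T_k = τ_{k+1} − τ_k`. -/
def regInt {Ω : Type*} (τ : ℕ → Ω → ℕ) (k : ℕ) (ω : Ω) : ℕ := τ (k + 1) ω - τ k ω

/-- The `k`-th regeneration block: the pair consisting of `T_k` and the increment path
`(X_{τ_k, τ_k + m})_{0 ≤ m ≤ T_k}` (frozen after time `T_k`). -/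
def block {Ω : Type*} {d : ℕ} (X : ℕ → Ω → (Fin d → ℝ)) (τ : ℕ → Ω → ℕ) (k : ℕ) (ω : Ω) :
    ℕ × (ℕ → Fin d → ℝ) :=
  (regInt τ k ω, fun m => X (τ k ω + min m (regInt τ k ω)) ω - X (τ k ω) ω)

/-- `Ξ_m^i = max{|X^i_{τ_m, τ_m + k}| : 0 ≤ k ≤ T_m}`. -/
def XiC {Ω : Type*} {d : ℕ} (X : ℕ → Ω → (Fin d → ℝ)) (τ : ℕ → Ω → ℕ) (i : Fin d)
    (m : ℕ) (ω : Ω) : ℝ :=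
  (Finset.range (regInt τ m ω + 1)).sup' Finset.nonempty_range_add_one
    (fun k => |X (τ m ω + k) ω i - X (τ m ω) ω i|)

/-- Euclidean norm `|Ξ_m|` of the vector `Ξ_m = (Ξ_m^1, …, Ξ_m^d)`. -/
def XiNorm {Ω : Type*} {d : ℕ} (X : ℕ → Ω → (Fin d → ℝ)) (τ : ℕ → Ω → ℕ)
    (m : ℕ) (ω : Ω) : ℝ :=
  Real.sqrt (∑ i : Fin d, XiC X τ i m ω ^ 2)

/-- Delayed regenerative increments: `τ₀ = 0`, the `τ_k` are strictly increasing, all data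
is measurable, the regeneration blocks form an independent family, and the blocks with
index `k ≥ 1` are identically distributed (hence i.i.d. and independent of the initial
block). -/
structure DelayedRegenerative {Ω : Type*} [MeasurableSpace Ω] (P : Measure Ω) {d : ℕ}
    (X : ℕ → Ω → (Fin d → ℝ)) (τ : ℕ → Ω → ℕ) : Prop where
  tau_zero : ∀ ω, τ 0 ω = 0
  tau_mono : ∀ ω, StrictMono fun k => τ k ω
  meas_X : ∀ k, Measurable (X k)
  meas_tau : ∀ k, Measurable (τ k)
  indep : iIndepFun (block X τ) P
  ident : ∀ k : ℕ, 1 ≤ k → IdentDistrib (block X τ k) (block X τ 1) P P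

/-- Assumption (A): for every coordinate `i`, every `m ∈ {0,1}` and `q ∈ {0,2}`,
`0 < E[(Ξ_m^i)^q T_m] < ∞`. -/
def AssumptionA {Ω : Type*} [MeasurableSpace Ω] (P : Measure Ω) {d : ℕ}
    (X : ℕ → Ω → (Fin d → ℝ)) (τ : ℕ → Ω → ℕ) : Prop :=
  ∀ i : Fin d, ∀ m ∈ ({0, 1} : Set ℕ), ∀ q ∈ ({0, 2} : Set ℕ),
    Integrable (fun ω => XiC X τ i m ω ^ q * (regInt τ m ω : ℝ)) P ∧
      0 < ∫ ω, XiC X τ i m ω ^ q * (regInt τ m ω : ℝ) ∂P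

/-- Centering: `E[X_{τ_k, τ_{k+1}}] = 0` (componentwise, with integrability) for `k ≥ 1`. -/
def Centered {Ω : Type*} [MeasurableSpace Ω] (P : Measure Ω) {d : ℕ}
    (X : ℕ → Ω → (Fin d → ℝ)) (τ : ℕ → Ω → ℕ) : Prop :=
  ∀ k : ℕ, 1 ≤ k → ∀ i : Fin d,
    Integrable (fun ω => X (τ (k + 1) ω) ω i - X (τ k ω) ω i) P ∧
      ∫ ω, (X (τ (k + 1) ω) ω i - X (τ k ω) ω i) ∂P = 0

section MainAux

variable {Ω : Type*} [MeasurableSpace Ω] {d : ℕ}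

lemma meas_apply' {E : Type*} [MeasurableSpace E] {X : ℕ → Ω → E}
    (hX : ∀ n, Measurable (X n)) {N : Ω → ℕ} (hN : Measurable N) :
    Measurable fun ω => X (N ω) ω := by
  have h : Measurable fun p : Ω × ℕ => X p.2 p.1 :=
    measurable_from_prod_countable_left fun n => hX n
  exact h.comp (measurable_id.prodMk hN)

lemma measurable_regInt {τ : ℕ → Ω → ℕ} (hτ : ∀ k, Measurable (τ k)) (k : ℕ) :
    Measurable (regInt τ k) := (hτ (k + 1)).sub (hτ k)

lemma measurable_block {X : ℕ → Ω → (Fin d → ℝ)} {τ : ℕ → Ω → ℕ}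
    (hX : ∀ k, Measurable (X k)) (hτ : ∀ k, Measurable (τ k)) (k : ℕ) :
    Measurable (block X τ k) := by
  apply Measurable.prodMk (measurable_regInt hτ k)
  apply measurable_pi_lambda
  intro m
  exact (meas_apply' hX ((hτ k).add (measurable_const.min (measurable_regInt hτ k))))
    |>.sub (meas_apply' hX (hτ k))

/-- The functional extracting `Ξ^i` from a block. -/
def FXi {d : ℕ} (i : Fin d) (p : ℕ × (ℕ → Fin d → ℝ)) : ℝ :=
  (Finset.range (p.1 + 1)).sup' Finset.nonempty_range_add_one (fun k => |p.2 k i|)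

lemma measurable_FXi (i : Fin d) : Measurable (FXi i) := by
  have h : Measurable fun q : (ℕ → Fin d → ℝ) × ℕ =>
      (Finset.range (q.2 + 1)).sup' Finset.nonempty_range_add_one (fun k => |q.1 k i|) := by
    apply measurable_from_prod_countable_left
    intro n
    exact Finset.measurable_range_sup''
      (fun k _ => ((measurable_pi_apply i).comp (measurable_pi_apply k)).abs)
  exact h.comp measurable_swap

omit [MeasurableSpace Ω] in
lemma XiC_eq_FXi_block {X : ℕ → Ω → (Fin d → ℝ)} {τ : ℕ → Ω → ℕ} (i : Fin d) (m : ℕ)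
    (ω : Ω) : XiC X τ i m ω = FXi i (block X τ m ω) := by
  unfold XiC FXi block
  apply Finset.sup'_congr _ rfl
  intro k hk
  rw [Finset.mem_range, Nat.lt_succ_iff] at hk
  simp [min_eq_left hk]

lemma measurable_XiC {X : ℕ → Ω → (Fin d → ℝ)} {τ : ℕ → Ω → ℕ}
    (hX : ∀ k, Measurable (X k)) (hτ : ∀ k, Measurable (τ k)) (i : Fin d) (m : ℕ) :
    Measurable (XiC X τ i m) := by
  have h : XiC X τ i m = FXi i ∘ block X τ m := funext (XiC_eq_FXi_block i m)
  rw [h]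
  exact (measurable_FXi i).comp (measurable_block hX hτ m)

lemma identDistrib_XiC {P : Measure Ω} {X : ℕ → Ω → (Fin d → ℝ)} {τ : ℕ → Ω → ℕ}
    (hreg : DelayedRegenerative P X τ) (i : Fin d) {m : ℕ} (hm : 1 ≤ m) :
    IdentDistrib (XiC X τ i m) (XiC X τ i 1) P P := by
  have h := (hreg.ident m hm).comp (measurable_FXi i)
  have e1 : FXi i ∘ block X τ m = XiC X τ i m := (funext (XiC_eq_FXi_block i m)).symm
  have e2 : FXi i ∘ block X τ 1 = XiC X τ i 1 := (funext (XiC_eq_FXi_block i 1)).symm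
  rwa [e1, e2] at h

lemma sqrt_nat_atTop : Tendsto (fun n : ℕ => Real.sqrt n) atTop atTop := by
  have h : Tendsto (fun x : ℝ => x ^ (1/2 : ℝ)) atTop atTop := tendsto_rpow_atTop (by norm_num)
  have he : (fun n : ℕ => Real.sqrt n) = (fun x : ℝ => x ^ (1/2 : ℝ)) ∘ (fun n : ℕ => (n : ℝ)) := by
    funext n; simp [Real.sqrt_eq_rpow]
  rw [he]
  exact h.comp tendsto_natCast_atTop_atTop

lemma tendsto_mul_prob (P : Measure Ω) [IsProbabilityMeasure P]
    {Y : Ω → ℝ} (hY : Measurable Y) (hInt : Integrable (fun ω => Y ω ^ 2) P)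
    {ε : ℝ} (hε : 0 < ε) :
    Tendsto (fun n : ℕ => (n : ℝ) * (P {ω | ε * Real.sqrt n ≤ Y ω}).toReal) atTop (𝓝 0) := by
  set s : ℕ → Set Ω := fun n => {ω | ε * Real.sqrt n ≤ Y ω} with hs_def
  have hs : ∀ n, MeasurableSet (s n) := fun n => measurableSet_le measurable_const hY
  have key : ∀ n : ℕ, (n : ℝ) * (P (s n)).toReal ≤ ε⁻¹ ^ 2 * ∫ ω in s n, Y ω ^ 2 ∂P := by
    intro n
    have h1 : ∫ _ω in s n, (ε * Real.sqrt n) ^ 2 ∂P ≤ ∫ ω in s n, Y ω ^ 2 ∂P := by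
      apply setIntegral_mono_on (integrableOn_const (measure_lt_top P _).ne)
        hInt.integrableOn (hs n)
      intro ω hω
      have h0 : 0 ≤ ε * Real.sqrt n := by positivity
      exact pow_le_pow_left₀ h0 hω 2
    rw [setIntegral_const, smul_eq_mul] at h1
    have h2 : (ε * Real.sqrt n) ^ 2 = ε ^ 2 * n := by
      rw [mul_pow, Real.sq_sqrt (Nat.cast_nonneg n)]
    have h3 : (n : ℝ) * (P (s n)).toReal
        = ε⁻¹ ^ 2 * ((P (s n)).toReal * (ε * Real.sqrt n) ^ 2) := by
      rw [h2]; field_simp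
    rw [h3]
    exact mul_le_mul_of_nonneg_left h1 (by positivity)
  have hDCT : Tendsto (fun n => ∫ ω in s n, Y ω ^ 2 ∂P) atTop (𝓝 0) := by
    have heq : ∀ n, ∫ ω in s n, Y ω ^ 2 ∂P
        = ∫ ω, (s n).indicator (fun ω => Y ω ^ 2) ω ∂P :=
      fun n => (integral_indicator (hs n)).symm
    have h0 : (0 : ℝ) = ∫ _ω, (0 : ℝ) ∂P := by simp
    rw [funext heq, h0]
    apply tendsto_integral_of_dominated_convergence (fun ω => Y ω ^ 2)
      (fun n => ((hY.pow_const 2).aestronglyMeasurable.indicator (hs n))) hInt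
    · intro n
      filter_upwards with ω
      calc ‖(s n).indicator (fun ω => Y ω ^ 2) ω‖
          ≤ ‖Y ω ^ 2‖ := norm_indicator_le_norm_self _ _
        _ = Y ω ^ 2 := by rw [Real.norm_eq_abs, abs_of_nonneg (sq_nonneg _)]
    · filter_upwards with ω
      have hInf : Tendsto (fun n : ℕ => ε * Real.sqrt n) atTop atTop :=
        Tendsto.const_mul_atTop hε sqrt_nat_atTop
      have hev : ∀ᶠ n in atTop, (s n).indicator (fun ω => Y ω ^ 2) ω = 0 := by
        filter_upwards [hInf.eventually_gt_atTop (Y ω)] with n hn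
        exact Set.indicator_of_notMem (fun h => absurd h (not_le.mpr hn)) _
      exact tendsto_const_nhds.congr' (hev.mono fun n hn => hn.symm)
  have hlim : Tendsto (fun n => ε⁻¹ ^ 2 * ∫ ω in s n, Y ω ^ 2 ∂P) atTop (𝓝 0) := by
    have := hDCT.const_mul (ε⁻¹ ^ 2)
    simpa using this
  exact squeeze_zero (fun n => by positivity) key hlim

lemma abs_interp_sub_le {d : ℕ} (Z : ℕ → Fin d → ℝ) (n : ℕ) (t : ℝ) (ht : 0 ≤ t)
    (c r : ℕ) (h1 : (c : ℝ) ≤ (n : ℝ) * t) (h2 : (n : ℝ) * t < c + r) (i : Fin d) :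
    |interp Z n t i - (Real.sqrt n)⁻¹ * Z c i| ≤
      (Real.sqrt n)⁻¹ *
        (Finset.range (r + 1)).sup' Finset.nonempty_range_add_one
          (fun k => |Z (c + k) i - Z c i|) := by
  have hu0 : 0 ≤ (n : ℝ) * t := mul_nonneg (Nat.cast_nonneg n) ht
  set u : ℝ := (n : ℝ) * t with hu
  set a : ℕ := ⌊u⌋₊ with ha
  set θ : ℝ := u - a with hθ
  have hθ0 : 0 ≤ θ := sub_nonneg.mpr (Nat.floor_le hu0)
  have hθ1 : θ ≤ 1 := by
    have := Nat.lt_floor_add_one u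
    simp only [hθ]; linarith
  have hca : c ≤ a := Nat.le_floor h1
  have ha1 : a + 1 ≤ c + r :=
    Nat.succ_le_of_lt ((Nat.floor_lt hu0).mpr (by push_cast; exact h2))
  clear_value θ
  clear_value a
  clear_value u
  set S : ℝ := (Finset.range (r + 1)).sup' Finset.nonempty_range_add_one
      (fun k => |Z (c + k) i - Z c i|) with hS
  have bA : |Z a i - Z c i| ≤ S := by
    have hmem : a - c ∈ Finset.range (r + 1) := Finset.mem_range.mpr (by omega)
    have := Finset.le_sup' (fun k => |Z (c + k) i - Z c i|) hmem
    rwa [Nat.add_sub_cancel' hca] at this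
  have bB : |Z (a + 1) i - Z c i| ≤ S := by
    have hmem : a + 1 - c ∈ Finset.range (r + 1) := Finset.mem_range.mpr (by omega)
    have := Finset.le_sup' (fun k => |Z (c + k) i - Z c i|) hmem
    rwa [show c + (a + 1 - c) = a + 1 by omega] at this
  have hS0 : 0 ≤ S := le_trans (abs_nonneg _) bA
  have hinv : 0 ≤ (Real.sqrt n)⁻¹ := by positivity
  have hexp : interp Z n t i - (Real.sqrt n)⁻¹ * Z c i =
      (Real.sqrt n)⁻¹ * ((1 - θ) * (Z a i - Z c i) + θ * (Z (a + 1) i - Z c i)) := by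
    simp only [interp, Pi.add_apply, Pi.smul_apply, Pi.sub_apply, smul_eq_mul, ← hu, ← ha, ← hθ]
    field_simp
    ring
  rw [hexp, abs_mul, abs_of_nonneg hinv]
  apply mul_le_mul_of_nonneg_left _ hinv
  calc |(1 - θ) * (Z a i - Z c i) + θ * (Z (a + 1) i - Z c i)|
      ≤ |(1 - θ) * (Z a i - Z c i)| + |θ * (Z (a + 1) i - Z c i)| := abs_add_le _ _
    _ = (1 - θ) * |Z a i - Z c i| + θ * |Z (a + 1) i - Z c i| := by
        rw [abs_mul, abs_mul, abs_of_nonneg (by linarith : (0:ℝ) ≤ 1 - θ), abs_of_nonneg hθ0]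
    _ ≤ S := by nlinarith

end MainAux

/-- under Assumption (A), for each coordinate `i` and each `T > 0`,
`sup_{t∈[0,T]} |X^{(n),i}_t − n^{−1/2} X^i_{τ_{κ(nt)}}| → 0` in probability. -/
theorem interpolation_close_to_regeneration_skeleton {Ω : Type*} [MeasurableSpace Ω]
    (P : Measure Ω) [IsProbabilityMeasure P] {d : ℕ}
    (X : ℕ → Ω → (Fin d → ℝ)) (τ : ℕ → Ω → ℕ)
    (hreg : DelayedRegenerative P X τ) (hA : AssumptionA P X τ)
    (κ : ℝ → Ω → ℕ)
    (hκ : ∀ u : ℝ, 0 ≤ u → ∀ ω, (τ (κ u ω) ω : ℝ) ≤ u ∧ u < τ (κ u ω + 1) ω)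
    (T : ℝ) (hT : 0 < T) (i : Fin d) :
    ∀ ε > (0 : ℝ), Tendsto
      (fun n : ℕ => (P {ω | ∃ t ∈ Set.Icc (0 : ℝ) T, ε ≤
        |interp (fun k => X k ω) n t i -
          (Real.sqrt n)⁻¹ * X (τ (κ ((n : ℝ) * t) ω) ω) ω i|}).toReal)
      atTop (𝓝 0) := by
  intro ε hε
  have hX := hreg.meas_X
  have hτm := hreg.meas_tau
  have hrge1 : ∀ m ω, 1 ≤ regInt τ m ω := by
    intro m ω
    have hlt : τ m ω < τ (m + 1) ω := hreg.tau_mono ω (Nat.lt_succ_self m)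
    unfold regInt; omega
  set s : ℕ → ℕ → Set Ω := fun m n => {ω | ε * Real.sqrt n ≤ XiC X τ i m ω} with hs_def
  -- inclusion into the union of tail events
  have hincl : ∀ n : ℕ, {ω | ∃ t ∈ Set.Icc (0 : ℝ) T, ε ≤
        |interp (fun k => X k ω) n t i -
          (Real.sqrt n)⁻¹ * X (τ (κ ((n : ℝ) * t) ω) ω) ω i|}
      ⊆ ⋃ m ∈ Finset.range (⌊(n : ℝ) * T⌋₊ + 1), s m n := by
    intro n ω hω
    obtain ⟨t, ht, hεle⟩ := hω
    have hu0 : 0 ≤ (n : ℝ) * t := mul_nonneg (Nat.cast_nonneg n) ht.1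
    obtain ⟨hl, hr⟩ := hκ ((n : ℝ) * t) hu0 ω
    set κ₀ := κ ((n : ℝ) * t) ω with hκ₀
    have hlt : τ κ₀ ω < τ (κ₀ + 1) ω := hreg.tau_mono ω (Nat.lt_succ_self κ₀)
    have hnat : τ (κ₀ + 1) ω = τ κ₀ ω + regInt τ κ₀ ω := by unfold regInt; omega
    have h2 : (n : ℝ) * t < (τ κ₀ ω : ℝ) + (regInt τ κ₀ ω : ℝ) := by
      calc (n : ℝ) * t < (τ (κ₀ + 1) ω : ℝ) := hr
        _ = (τ κ₀ ω : ℝ) + (regInt τ κ₀ ω : ℝ) := by rw [hnat]; push_cast; ring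
    have key := abs_interp_sub_le (fun k => X k ω) n t ht.1 (τ κ₀ ω) (regInt τ κ₀ ω) hl h2 i
    have hkey2 : ε ≤ (Real.sqrt n)⁻¹ * XiC X τ i κ₀ ω := le_trans hεle key
    rcases Nat.eq_zero_or_pos n with h0 | hpos
    · exfalso
      rw [h0] at hkey2
      norm_num at hkey2
      linarith
    · have hsp : 0 < Real.sqrt n := Real.sqrt_pos.mpr (by exact_mod_cast hpos)
      have hXiω : ε * Real.sqrt n ≤ XiC X τ i κ₀ ω := by
        rw [inv_mul_eq_div] at hkey2
        exact (le_div_iff₀ hsp).mp hkey2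
      have hκle : κ₀ ∈ Finset.range (⌊(n : ℝ) * T⌋₊ + 1) := by
        apply Finset.mem_range.mpr (Nat.lt_succ_of_le (Nat.le_floor ?_))
        calc (κ₀ : ℝ) ≤ (τ κ₀ ω : ℝ) := by exact_mod_cast (hreg.tau_mono ω).le_apply
          _ ≤ (n : ℝ) * t := hl
          _ ≤ (n : ℝ) * T := mul_le_mul_of_nonneg_left ht.2 (Nat.cast_nonneg n)
      exact Set.mem_iUnion₂.mpr ⟨κ₀, hκle, hXiω⟩
  -- integrability of Ξ²
  have hsqInt : ∀ m ∈ ({0, 1} : Set ℕ), Integrable (fun ω => XiC X τ i m ω ^ 2) P := by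
    intro m hm
    obtain ⟨hint, -⟩ := hA i m hm 2 (by simp)
    apply hint.mono' ((measurable_XiC hX hτm i m).pow_const 2).aestronglyMeasurable
    filter_upwards with ω
    have h1 : (1 : ℝ) ≤ (regInt τ m ω : ℝ) := by exact_mod_cast hrge1 m ω
    have h0 : 0 ≤ XiC X τ i m ω ^ 2 := sq_nonneg _
    rw [Real.norm_eq_abs, abs_of_nonneg h0]
    exact le_mul_of_one_le_right h0 h1
  have hlim1 : Tendsto (fun n : ℕ => (n : ℝ) * (P (s 1 n)).toReal) atTop (𝓝 0) :=
    tendsto_mul_prob P (measurable_XiC hX hτm i 1) (hsqInt 1 (by simp)) hε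
  have hlim0m : Tendsto (fun n : ℕ => (n : ℝ) * (P (s 0 n)).toReal) atTop (𝓝 0) :=
    tendsto_mul_prob P (measurable_XiC hX hτm i 0) (hsqInt 0 (by simp)) hε
  have hlim0 : Tendsto (fun n : ℕ => (P (s 0 n)).toReal) atTop (𝓝 0) := by
    apply squeeze_zero' (Eventually.of_forall fun n => ENNReal.toReal_nonneg) _ hlim0m
    filter_upwards [eventually_ge_atTop 1] with n hn
    exact le_mul_of_one_le_left ENNReal.toReal_nonneg (by exact_mod_cast hn)
  -- identical distribution
  have hid : ∀ (m n : ℕ), P (s (m + 1) n) = P (s 1 n) := by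
    intro m n
    exact (identDistrib_XiC hreg i (Nat.le_add_left 1 m)).measure_mem_eq
      (measurableSet_Ici (a := ε * Real.sqrt n))
  -- the union bound
  have hbound : ∀ n : ℕ, (P {ω | ∃ t ∈ Set.Icc (0 : ℝ) T, ε ≤
        |interp (fun k => X k ω) n t i -
          (Real.sqrt n)⁻¹ * X (τ (κ ((n : ℝ) * t) ω) ω) ω i|}).toReal
      ≤ (P (s 0 n)).toReal + T * ((n : ℝ) * (P (s 1 n)).toReal) := by
    intro n
    set N := ⌊(n : ℝ) * T⌋₊ with hN_def
    have h1 : P {ω | ∃ t ∈ Set.Icc (0 : ℝ) T, ε ≤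
          |interp (fun k => X k ω) n t i -
            (Real.sqrt n)⁻¹ * X (τ (κ ((n : ℝ) * t) ω) ω) ω i|}
        ≤ ∑ m ∈ Finset.range (N + 1), P (s m n) :=
      (measure_mono (hincl n)).trans (measure_biUnion_finset_le _ _)
    have hfin : (∑ m ∈ Finset.range (N + 1), P (s m n)) ≠ ∞ :=
      (ENNReal.sum_lt_top.mpr fun m _ => measure_lt_top P _).ne
    have h2 := ENNReal.toReal_mono hfin h1
    rw [ENNReal.toReal_sum (fun m _ => (measure_lt_top P _).ne), Finset.sum_range_succ'] at h2
    simp only [hid] at h2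
    rw [Finset.sum_const, Finset.card_range, nsmul_eq_mul] at h2
    have hNle : (N : ℝ) ≤ (n : ℝ) * T := Nat.floor_le (by positivity)
    have h3 : (N : ℝ) * (P (s 1 n)).toReal ≤ ((n : ℝ) * T) * (P (s 1 n)).toReal :=
      mul_le_mul_of_nonneg_right hNle ENNReal.toReal_nonneg
    calc (P _).toReal ≤ (N : ℝ) * (P (s 1 n)).toReal + (P (s 0 n)).toReal := h2
      _ ≤ (P (s 0 n)).toReal + T * ((n : ℝ) * (P (s 1 n)).toReal) := by linarith
  have hrhs : Tendsto (fun n : ℕ =>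
      (P (s 0 n)).toReal + T * ((n : ℝ) * (P (s 1 n)).toReal)) atTop (𝓝 0) := by
    have := hlim0.add (hlim1.const_mul T)
    simpa using this
  exact squeeze_zero (fun n => ENNReal.toReal_nonneg) hbound hrhs


end
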